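/- Let f⁽¹⁾, f⁽²⁾ ∈ ℝ₊ᴺ with ∑ᵢ fᵢ⁽¹⁾ Δvᵢ = ∑ᵢ fᵢ⁽²⁾ Δvᵢ = ∑ᵢ Δvᵢ. If η(f⁽¹⁾) ≤ η(f⁽²⁾) then ∑ᵢ (fᵢ⁽¹⁾ − 1)² Δvᵢ ≤ 2 ‖f⁽¹⁾‖_∞ ∑ᵢ (fᵢ⁽²⁾ − 1)² Δvᵢ. -/

import Mathlib

lemma ent_nonneg {x : ℝ} (hx : 0 ≤ x) : 0 ≤ x * Real.log x - x + 1 := by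
  rcases eq_or_lt_of_le hx with h | h
  · simp [← h]
  · have h2 := Real.log_le_sub_one_of_pos (show (0:ℝ) < x⁻¹ by positivity)
    rw [Real.log_inv] at h2
    have hx' : x ≠ 0 := h.ne'
    have : -Real.log x ≤ x⁻¹ - 1 := h2
    have h3 : x * (-Real.log x) ≤ x * (x⁻¹ - 1) := by
      exact mul_le_mul_of_nonneg_left this hx
    rw [mul_sub, mul_inv_cancel₀ hx'] at h3
    nlinarith
lemma ent_le_sq {x : ℝ} (hx : 0 ≤ x) : x * Real.log x - x + 1 ≤ (x - 1) ^ 2 := by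
  rcases eq_or_lt_of_le hx with h | h
  · simp [← h]
  · have h2 := Real.log_le_sub_one_of_pos h
    nlinarith [mul_le_mul_of_nonneg_left h2 hx]

lemma hasDerivAt_ent {t : ℝ} (ht : 0 < t) :
    HasDerivAt (fun t : ℝ => t * Real.log t) (Real.log t + 1) t := by
  have := (hasDerivAt_id t).fun_mul (Real.hasDerivAt_log ht.ne')
  simpa [mul_inv_cancel₀ ht.ne'] using this

lemma sq_le_two_ent {x : ℝ} (hx : 0 < x) (hx1 : x ≤ 1) :
    (x - 1) ^ 2 ≤ 2 * (x * Real.log x - x + 1) := by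
  set G : ℝ → ℝ := fun t => 2 * (t * Real.log t - t + 1) - (t - 1) ^ 2 with hG
  have hder : ∀ t : ℝ, 0 < t → HasDerivAt G (2 * Real.log t - 2 * (t - 1)) t := by
    intro t ht
    have h2 : HasDerivAt (fun t : ℝ => (t - 1) ^ 2) (2 * (t - 1)) t := by
      have := ((hasDerivAt_id t).sub_const 1).fun_pow 2
      simpa using this
    have := ((((hasDerivAt_ent ht).fun_sub (hasDerivAt_id' t)).add_const 1).const_mul 2).fun_sub h2
    exact this.congr_deriv (by ring)
  have hmono : AntitoneOn G (Set.Icc x 1) := by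
    apply antitoneOn_of_deriv_nonpos (convex_Icc x 1)
    · intro t ht
      exact (hder t (lt_of_lt_of_le hx ht.1)).continuousAt.continuousWithinAt
    · intro t ht
      rw [interior_Icc] at ht
      exact (hder t (hx.trans ht.1)).differentiableAt.differentiableWithinAt
    · intro t ht
      rw [interior_Icc] at ht
      rw [(hder t (hx.trans ht.1)).deriv]
      have := Real.log_le_sub_one_of_pos (hx.trans ht.1)
      linarith
  have hG1 : G 1 = 0 := by simp [hG]
  have := hmono (Set.left_mem_Icc.2 hx1) (Set.right_mem_Icc.2 hx1) hx1
  rw [hG1] at this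
  simp only [hG] at this
  linarith

lemma sq_le_two_mul_ent {x : ℝ} (hx1 : 1 ≤ x) :
    (x - 1) ^ 2 ≤ 2 * x * (x * Real.log x - x + 1) := by
  set F : ℝ → ℝ := fun t => 2 * (t * (t * Real.log t - t + 1)) - (t - 1) ^ 2 with hF
  have hder : ∀ t : ℝ, 0 < t → HasDerivAt F (4 * (t * Real.log t - t + 1)) t := by
    intro t ht
    have h2 : HasDerivAt (fun t : ℝ => (t - 1) ^ 2) (2 * (t - 1)) t := by
      have := ((hasDerivAt_id t).sub_const 1).fun_pow 2
      simpa using this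
    have hinner : HasDerivAt (fun t : ℝ => t * Real.log t - t + 1)
        (Real.log t + 1 - 1) t :=
      ((hasDerivAt_ent ht).sub (hasDerivAt_id t)).add_const 1
    have hmul : HasDerivAt (fun t : ℝ => t * (t * Real.log t - t + 1))
        (1 * (t * Real.log t - t + 1) + t * (Real.log t + 1 - 1)) t :=
      (hasDerivAt_id t).mul hinner
    have := (hmul.const_mul 2).fun_sub h2
    exact this.congr_deriv (by ring)
  have hmono : MonotoneOn F (Set.Icc 1 x) := by
    apply monotoneOn_of_deriv_nonneg (convex_Icc 1 x)
    · intro t ht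
      exact (hder t (lt_of_lt_of_le one_pos ht.1)).continuousAt.continuousWithinAt
    · intro t ht
      rw [interior_Icc] at ht
      exact (hder t (lt_trans one_pos ht.1)).differentiableAt.differentiableWithinAt
    · intro t ht
      rw [interior_Icc] at ht
      rw [(hder t (lt_trans one_pos ht.1)).deriv]
      have := ent_nonneg (le_of_lt (lt_trans one_pos ht.1))
      linarith
  have hF1 : F 1 = 0 := by simp [hF]
  have := hmono (Set.left_mem_Icc.2 hx1) (Set.right_mem_Icc.2 hx1) hx1
  rw [hF1] at this
  simp only [hF] at this
  nlinarith [this]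

lemma sq_le_ent_key {x M : ℝ} (hx : 0 ≤ x) (hM1 : 1 ≤ M) (hxM : x ≤ M) :
    (x - 1) ^ 2 ≤ 2 * M * (x * Real.log x - x + 1) := by
  rcases le_or_gt x 1 with h | h
  · rcases eq_or_lt_of_le hx with h0 | h0
    · simp [← h0]; linarith
    · calc (x - 1) ^ 2 ≤ 2 * (x * Real.log x - x + 1) := sq_le_two_ent h0 h
        _ ≤ 2 * M * (x * Real.log x - x + 1) := by
            have := ent_nonneg hx
            nlinarith
  · calc (x - 1) ^ 2 ≤ 2 * x * (x * Real.log x - x + 1) := sq_le_two_mul_ent h.le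
      _ ≤ 2 * M * (x * Real.log x - x + 1) := by
          have := ent_nonneg hx
          nlinarith

/-- If `η(f1) ≤ η(f2)` for two nonnegative vectors of equal mass (equal to the
total weight), then `‖f1 - 1‖₂² ≤ 2 ‖f1‖_∞ ‖f2 - 1‖₂²`. -/
theorem entropy_order_two_norm
    (N : ℕ) (hN : 0 < N) (Δv f1 f2 : Fin N → ℝ)
    (hΔv : ∀ i, 0 < Δv i) (hf1 : ∀ i, 0 ≤ f1 i) (hf2 : ∀ i, 0 ≤ f2 i)
    (hmass1 : (∑ i, f1 i * Δv i) = ∑ i, Δv i)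
    (hmass2 : (∑ i, f2 i * Δv i) = ∑ i, Δv i)
    (hη : (∑ i, f1 i * Real.log (f1 i) * Δv i) ≤ ∑ i, f2 i * Real.log (f2 i) * Δv i) :
    (∑ i, (f1 i - 1) ^ 2 * Δv i) ≤
      2 * (⨆ i, f1 i) * ∑ i, (f2 i - 1) ^ 2 * Δv i := by
  haveI : Nonempty (Fin N) := ⟨⟨0, hN⟩⟩
  set M := ⨆ i, f1 i with hM
  have hbdd : BddAbove (Set.range f1) := (Set.finite_range f1).bddAbove
  have hle : ∀ i, f1 i ≤ M := fun i => le_ciSup hbdd i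
  have hM1 : 1 ≤ M := by
    by_contra h
    push_neg at h
    have hlt : ∀ i, f1 i < 1 := fun i => lt_of_le_of_lt (hle i) h
    have : (∑ i, f1 i * Δv i) < ∑ i, 1 * Δv i := by
      apply Finset.sum_lt_sum_of_nonempty Finset.univ_nonempty
      intro i _
      have := hΔv i
      nlinarith [hlt i]
    simp only [one_mul] at this
    linarith [hmass1]
  -- pointwise bounds
  have step1 : (∑ i, (f1 i - 1) ^ 2 * Δv i) ≤
      ∑ i, 2 * M * (f1 i * Real.log (f1 i) - f1 i + 1) * Δv i := by
    apply Finset.sum_le_sum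
    intro i _
    exact mul_le_mul_of_nonneg_right (sq_le_ent_key (hf1 i) hM1 (hle i)) (hΔv i).le
  have e1 : (∑ i, 2 * M * (f1 i * Real.log (f1 i) - f1 i + 1) * Δv i) =
      2 * M * ∑ i, f1 i * Real.log (f1 i) * Δv i := by
    have : (∑ i, (f1 i * Real.log (f1 i) - f1 i + 1) * Δv i) =
        ∑ i, f1 i * Real.log (f1 i) * Δv i := by
      simp only [sub_mul, add_mul, one_mul]
      rw [Finset.sum_add_distrib, Finset.sum_sub_distrib, hmass1]
      ring
    calc (∑ i, 2 * M * (f1 i * Real.log (f1 i) - f1 i + 1) * Δv i)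
        = 2 * M * ∑ i, (f1 i * Real.log (f1 i) - f1 i + 1) * Δv i := by
          rw [Finset.mul_sum]; congr 1; ext i; ring
      _ = 2 * M * ∑ i, f1 i * Real.log (f1 i) * Δv i := by rw [this]
  have e2 : (2 * M * ∑ i, f2 i * Real.log (f2 i) * Δv i) =
      ∑ i, 2 * M * (f2 i * Real.log (f2 i) - f2 i + 1) * Δv i := by
    have : (∑ i, (f2 i * Real.log (f2 i) - f2 i + 1) * Δv i) =
        ∑ i, f2 i * Real.log (f2 i) * Δv i := by
      simp only [sub_mul, add_mul, one_mul]
      rw [Finset.sum_add_distrib, Finset.sum_sub_distrib, hmass2]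
      ring
    calc 2 * M * (∑ i, f2 i * Real.log (f2 i) * Δv i)
        = 2 * M * ∑ i, (f2 i * Real.log (f2 i) - f2 i + 1) * Δv i := by rw [this]
      _ = ∑ i, 2 * M * (f2 i * Real.log (f2 i) - f2 i + 1) * Δv i := by
          rw [Finset.mul_sum]; congr 1; ext i; ring
  have step3 : (∑ i, 2 * M * (f2 i * Real.log (f2 i) - f2 i + 1) * Δv i) ≤
      2 * M * ∑ i, (f2 i - 1) ^ 2 * Δv i := by
    rw [Finset.mul_sum]
    apply Finset.sum_le_sum
    intro i _
    have h1 : f2 i * Real.log (f2 i) - f2 i + 1 ≤ (f2 i - 1) ^ 2 := ent_le_sq (hf2 i)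
    have h2 : (0:ℝ) ≤ 2 * M := by linarith
    calc 2 * M * (f2 i * Real.log (f2 i) - f2 i + 1) * Δv i
        ≤ 2 * M * (f2 i - 1) ^ 2 * Δv i := by
          apply mul_le_mul_of_nonneg_right _ (hΔv i).le
          exact mul_le_mul_of_nonneg_left h1 h2
      _ = 2 * M * ((f2 i - 1) ^ 2 * Δv i) := by ring
  have hmid : (2 * M * ∑ i, f1 i * Real.log (f1 i) * Δv i) ≤
      2 * M * ∑ i, f2 i * Real.log (f2 i) * Δv i :=
    mul_le_mul_of_nonneg_left hη (by linarith)
  linarith [step1, step3, e1.symm ▸ step1, hmid]
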